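/- arXiv:2205.10888 — 2 statements merged into one kernel-verified Lean document; each statement's English description precedes it below -/
import Mathlib

section
/- Let Z be a topological space, (Xₙ)_{n∈ℕ} a sequence of topological spaces with continuous structure maps πₙ : Xₙ₊₁ → Xₙ, and fₙ : Xₙ → Z continuous maps compatible with the inverse system, i.e. fₙ ∘ πₙ = fₙ₊₁ for all n. Suppose each fₙ is a Serre fibration and each structure map πₙ is a Serre fibration. Let X = {x ∈ Π_n Xₙ : πₙ(x_{n+1}) = xₙ for all n} be the inverse limit with the subspace topology of the product, and let f : X → Z be the induced map f(x) = f₀(x₀). Then f is a Serre fibration. -/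
open unitInterval

/-- A map `p : E → B` of topological spaces is a Serre fibration if it is continuous and has the
homotopy lifting property with respect to all cubes `[0,1]ⁿ`. -/
def IsSerreFibration {E B : Type*} [TopologicalSpace E] [TopologicalSpace B]
    (p : E → B) : Prop :=
  Continuous p ∧
    ∀ (n : ℕ) (H : C((Fin n → unitInterval) × unitInterval, B))
      (h₀ : C((Fin n → unitInterval), E)),
      (∀ x, p (h₀ x) = H (x, 0)) →
      ∃ H' : C((Fin n → unitInterval) × unitInterval, E),
        (∀ x, H' (x, 0) = h₀ x) ∧ ∀ z, p (H' z) = H z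

/-- **Lemma 4.24(1)** (topological form, sequential inverse systems).  Given an inverse system
of spaces `Xₙ` with continuous structure maps `πₙ : Xₙ₊₁ → Xₙ`, and compatible continuous maps
`fₙ : Xₙ → Z` such that every `fₙ` and every `πₙ` is a Serre fibration, the induced map from the
inverse limit `X = lim Xₙ` to `Z` is a Serre fibration. -/
theorem isSerreFibration_inverseLimit
    {Z : Type*} [TopologicalSpace Z]
    {X : ℕ → Type*} [∀ n, TopologicalSpace (X n)]
    (π : ∀ n, C(X (n + 1), X n)) (f : ∀ n, C(X n, Z))
    (hcompat : ∀ (n : ℕ) (x : X (n + 1)), f n (π n x) = f (n + 1) x)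
    (hf : ∀ n, IsSerreFibration (f n))
    (hπ : ∀ n, IsSerreFibration (π n)) :
    IsSerreFibration
      (fun x : {x : ∀ n, X n // ∀ n, π n (x (n + 1)) = x n} => f 0 (x.1 0)) := by
  constructor
  · exact (f 0).continuous.comp ((continuous_apply 0).comp continuous_subtype_val)
  · intro n H h₀ hinit
    -- base lift through `f 0`
    obtain ⟨G₀, hG₀1, hG₀2⟩ := (hf 0).2 n H
      ⟨fun x => (h₀ x).1 0, (continuous_apply 0).comp (continuous_subtype_val.comp h₀.continuous)⟩
      (fun x => hinit x)
    -- step lift through `π m`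
    have key : ∀ (m : ℕ) (G : C((Fin n → unitInterval) × unitInterval, X m)),
        (∀ x, G (x, 0) = (h₀ x).1 m) → (∀ z, f m (G z) = H z) →
        ∃ G' : C((Fin n → unitInterval) × unitInterval, X (m + 1)),
          (∀ x, G' (x, 0) = (h₀ x).1 (m + 1)) ∧ (∀ z, f (m + 1) (G' z) = H z) ∧
          (∀ z, π m (G' z) = G z) := by
      intro m G hG1 hG2
      obtain ⟨G', hG'1, hG'2⟩ := (hπ m).2 n G
        ⟨fun x => (h₀ x).1 (m + 1),
          (continuous_apply (m + 1)).comp (continuous_subtype_val.comp h₀.continuous)⟩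
        (fun x => by simpa [hG1 x] using (h₀ x).2 m)
      refine ⟨G', hG'1, fun z => ?_, hG'2⟩
      rw [← hcompat m (G' z), hG'2 z, hG2 z]
    choose step hstep1 hstep2 hstep3 using key
    -- the tower of lifts
    let g : ∀ m, {G : C((Fin n → unitInterval) × unitInterval, X m) //
        (∀ x, G (x, 0) = (h₀ x).1 m) ∧ (∀ z, f m (G z) = H z)} := fun m =>
      Nat.rec ⟨G₀, hG₀1, hG₀2⟩
        (fun m p => ⟨step m p.1 p.2.1 p.2.2, hstep1 m p.1 p.2.1 p.2.2, hstep2 m p.1 p.2.1 p.2.2⟩) m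
    have hcomp : ∀ m z, π m ((g (m + 1)).1 z) = (g m).1 z := fun m z =>
      hstep3 m (g m).1 (g m).2.1 (g m).2.2 z
    refine ⟨⟨fun z => ⟨fun m => (g m).1 z, fun m => hcomp m z⟩, ?_⟩, ?_, ?_⟩
    · exact Continuous.subtype_mk (continuous_pi fun m => (g m).1.continuous) _
    · intro x
      exact Subtype.ext (funext fun m => (g m).2.1 x)
    · intro z
      exact (g 0).2.2 z
end

section
/- Let A be a topological space, B ⊆ A a closed subset, and F a sheaf of sets on A. Let F(B) denote the direct limit, over the family of open sets U with B ⊆ U (directed under reverse inclusion), of the sets F(U) with the restriction maps; and let F(Op(B)∖B) denote the direct limit over the same family of the sets F(U∖B) with the restriction maps. Consider the canonical maps F(A) → F(B) and F(B) → F(Op(B)∖B) induced by restriction, and the maps F(A) → F(A∖B) and F(A∖B) → F(Op(B)∖B) given by restriction of sections; these form a commutative square. Then the induced map F(A) → F(A∖B) ×_{F(Op(B)∖B)} F(B) into the fibered product of sets is a bijection: a global section of F is precisely the same data as a section over A∖B together with a germ of a section along B that agree on a deleted germinal neighborhood of B. -/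
open CategoryTheory TopologicalSpace Opposite

universe u v

/-- Indexing set for germinal sections along a subset `B`: open sets containing `B`. -/
def NbhdIdx {A : Type u} [TopologicalSpace A] (B : Set A) : Type u :=
  {U : Opens A // B ⊆ ↑U}

/-- The relation identifying two sections, defined on open neighborhoods of `B`, when they agree
after restriction to a common smaller open neighborhood of `B`. -/
def GermRel {A : Type u} [TopologicalSpace A] (F : (Opens A)ᵒᵖ ⥤ Type v) (B : Set A) :
    (Σ U : NbhdIdx B, F.obj (op U.1)) → (Σ U : NbhdIdx B, F.obj (op U.1)) → Prop :=
  fun a b =>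
    ∃ (W : NbhdIdx B) (h₁ : W.1 ≤ a.1.1) (h₂ : W.1 ≤ b.1.1),
      F.map (homOfLE h₁).op a.2 = F.map (homOfLE h₂).op b.2

/-- `F(B)`: the direct limit, over open sets `U ⊇ B`, of the sections `F(U)` under
restriction. -/
def Germs {A : Type u} [TopologicalSpace A] (F : (Opens A)ᵒᵖ ⥤ Type v) (B : Set A) :
    Type (max u v) :=
  Quot (GermRel F B)

variable {A : Type u} [TopologicalSpace A]

/-- For `B` closed and `U` open, the open set `U ∖ B`. -/
def delOpen (B : Set A) (hB : IsClosed B) (U : Opens A) : Opens A :=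
  U ⊓ ⟨Bᶜ, hB.isOpen_compl⟩

/-- The relation identifying two sections defined on deleted neighborhoods `U ∖ B` of `B`, when
they agree after restriction to a common smaller deleted neighborhood `W ∖ B`. -/
def DelGermRel (F : (Opens A)ᵒᵖ ⥤ Type v) (B : Set A) (hB : IsClosed B) :
    (Σ U : NbhdIdx B, F.obj (op (delOpen B hB U.1))) →
      (Σ U : NbhdIdx B, F.obj (op (delOpen B hB U.1))) → Prop :=
  fun a b =>
    ∃ (W : NbhdIdx B) (h₁ : W.1 ≤ a.1.1) (h₂ : W.1 ≤ b.1.1),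
      F.map (homOfLE (inf_le_inf_right _ h₁ : delOpen B hB W.1 ≤ delOpen B hB a.1.1)).op a.2
        = F.map (homOfLE (inf_le_inf_right _ h₂ : delOpen B hB W.1 ≤ delOpen B hB b.1.1)).op b.2

/-- `F(Op(B) ∖ B)`: sections on a deleted germinal neighborhood of `B`, i.e. the direct limit
over open sets `U ⊇ B` of the sections `F(U ∖ B)` under restriction. -/
def DelGerms (F : (Opens A)ᵒᵖ ⥤ Type v) (B : Set A) (hB : IsClosed B) : Type (max u v) :=
  Quot (DelGermRel F B hB)

/-- The canonical restriction map `F(B) → F(Op(B) ∖ B)`. -/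
def germsToDelGerms (F : (Opens A)ᵒᵖ ⥤ Type v) (B : Set A) (hB : IsClosed B) :
    Germs F B → DelGerms F B hB :=
  Quot.lift
    (fun a => Quot.mk (DelGermRel F B hB)
      ⟨a.1, F.map (homOfLE (inf_le_left : delOpen B hB a.1.1 ≤ a.1.1)).op a.2⟩)
    (by
      rintro ⟨U, s⟩ ⟨V, t⟩ ⟨W, h₁, h₂, hst⟩
      apply Quot.sound
      refine ⟨W, h₁, h₂, ?_⟩
      show F.map (homOfLE (inf_le_inf_right _ h₁)).op
            (F.map (homOfLE (inf_le_left : delOpen B hB U.1 ≤ U.1)).op s)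
          = F.map (homOfLE (inf_le_inf_right _ h₂)).op
            (F.map (homOfLE (inf_le_left : delOpen B hB V.1 ≤ V.1)).op t)
      rw [← FunctorToTypes.map_comp_apply, ← FunctorToTypes.map_comp_apply]
      have e₁ : ((homOfLE (inf_le_left : delOpen B hB U.1 ≤ U.1)).op ≫
            (homOfLE (inf_le_inf_right _ h₁)).op : op U.1 ⟶ op (delOpen B hB W.1))
          = (homOfLE h₁).op ≫ (homOfLE (inf_le_left : delOpen B hB W.1 ≤ W.1)).op := rfl
      have e₂ : ((homOfLE (inf_le_left : delOpen B hB V.1 ≤ V.1)).op ≫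
            (homOfLE (inf_le_inf_right _ h₂)).op : op V.1 ⟶ op (delOpen B hB W.1))
          = (homOfLE h₂).op ≫ (homOfLE (inf_le_left : delOpen B hB W.1 ≤ W.1)).op := rfl
      have key := congrArg
        (fun z => F.map (homOfLE (inf_le_left : delOpen B hB W.1 ≤ W.1)).op z) hst
      rw [← FunctorToTypes.map_comp_apply, ← FunctorToTypes.map_comp_apply] at key
      exact key)

/-- The canonical map `F(A ∖ B) → F(Op(B) ∖ B)` restricting a section defined on all of
`A ∖ B` to a deleted germinal neighborhood of `B`. -/
def sectionToDelGerms (F : (Opens A)ᵒᵖ ⥤ Type v) (B : Set A) (hB : IsClosed B) :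
    F.obj (op (⟨Bᶜ, hB.isOpen_compl⟩ : Opens A)) → DelGerms F B hB :=
  fun u => Quot.mk (DelGermRel F B hB)
    ⟨⟨⊤, by simp⟩,
      F.map (homOfLE (inf_le_right :
        delOpen B hB ⊤ ≤ (⟨Bᶜ, hB.isOpen_compl⟩ : Opens A))).op u⟩

/-- The canonical map `F(A) → F(B)` sending a global section to its germ along `B`. -/
def germAlong (F : (Opens A)ᵒᵖ ⥤ Type v) (B : Set A) :
    F.obj (op (⊤ : Opens A)) → Germs F B :=
  fun s => Quot.mk (GermRel F B) ⟨⟨⊤, by simp⟩, s⟩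

/-- The restriction map `F(A) → F(A ∖ B)`. -/
def restrictAwayFrom (F : (Opens A)ᵒᵖ ⥤ Type v) (B : Set A) (hB : IsClosed B) :
    F.obj (op (⊤ : Opens A)) → F.obj (op (⟨Bᶜ, hB.isOpen_compl⟩ : Opens A)) :=
  F.map (homOfLE le_top).op

section Aux

variable {F : (Opens A)ᵒᵖ ⥤ Type v}

lemma aux_map_eq {U V : (Opens A)ᵒᵖ} (f g : U ⟶ V) (x : F.obj U) :
    F.map f x = F.map g x := by
  rw [Subsingleton.elim f g]

lemma res_res {U V W : Opens A} (h₁ : V ≤ U) (h₂ : W ≤ V) (x : F.obj (op U)) :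
    F.map (homOfLE h₂).op (F.map (homOfLE h₁).op x)
      = F.map (homOfLE (h₂.trans h₁)).op x := by
  rw [← FunctorToTypes.map_comp_apply]
  exact aux_map_eq _ _ x

lemma res_self {U : Opens A} (h : U ≤ U) (x : F.obj (op U)) :
    F.map (homOfLE h).op x = x := by
  rw [aux_map_eq (homOfLE h).op (𝟙 (op U)), FunctorToTypes.map_id_apply]

lemma germRel_equiv (F : (Opens A)ᵒᵖ ⥤ Type v) (B : Set A) :
    Equivalence (GermRel F B) := by
  constructor
  · rintro ⟨U, s⟩
    exact ⟨U, le_refl _, le_refl _, rfl⟩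
  · rintro ⟨U, s⟩ ⟨V, t⟩ ⟨W, h₁, h₂, e⟩
    exact ⟨W, h₂, h₁, e.symm⟩
  · rintro ⟨U, s⟩ ⟨V, t⟩ ⟨X, x⟩ ⟨W₁, h₁, h₂, e₁⟩ ⟨W₂, k₁, k₂, e₂⟩
    refine ⟨⟨W₁.1 ⊓ W₂.1, fun b hb => ⟨W₁.2 hb, W₂.2 hb⟩⟩,
      (inf_le_left : W₁.1 ⊓ W₂.1 ≤ W₁.1).trans h₁,
      (inf_le_right : W₁.1 ⊓ W₂.1 ≤ W₂.1).trans k₂, ?_⟩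
    have e₁' := congrArg (F.map (homOfLE (inf_le_left : W₁.1 ⊓ W₂.1 ≤ W₁.1)).op) e₁
    have e₂' := congrArg (F.map (homOfLE (inf_le_right : W₁.1 ⊓ W₂.1 ≤ W₂.1)).op) e₂
    rw [res_res, res_res] at e₁'
    rw [res_res, res_res] at e₂'
    rw [e₁']
    rw [aux_map_eq (homOfLE ((inf_le_left : W₁.1 ⊓ W₂.1 ≤ W₁.1).trans h₂)).op
      (homOfLE ((inf_le_right : W₁.1 ⊓ W₂.1 ≤ W₂.1).trans k₁)).op]
    rw [e₂']

lemma delGermRel_equiv (F : (Opens A)ᵒᵖ ⥤ Type v) (B : Set A) (hB : IsClosed B) :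
    Equivalence (DelGermRel F B hB) := by
  constructor
  · rintro ⟨U, s⟩
    exact ⟨U, le_refl _, le_refl _, rfl⟩
  · rintro ⟨U, s⟩ ⟨V, t⟩ ⟨W, h₁, h₂, e⟩
    exact ⟨W, h₂, h₁, e.symm⟩
  · rintro ⟨U, s⟩ ⟨V, t⟩ ⟨X, x⟩ ⟨W₁, h₁, h₂, e₁⟩ ⟨W₂, k₁, k₂, e₂⟩
    refine ⟨⟨W₁.1 ⊓ W₂.1, fun b hb => ⟨W₁.2 hb, W₂.2 hb⟩⟩,
      (inf_le_left : W₁.1 ⊓ W₂.1 ≤ W₁.1).trans h₁,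
      (inf_le_right : W₁.1 ⊓ W₂.1 ≤ W₂.1).trans k₂, ?_⟩
    have e₁' := congrArg (F.map (homOfLE (inf_le_inf_right _
      (inf_le_left : W₁.1 ⊓ W₂.1 ≤ W₁.1) : delOpen B hB (W₁.1 ⊓ W₂.1) ≤ delOpen B hB W₁.1)).op) e₁
    have e₂' := congrArg (F.map (homOfLE (inf_le_inf_right _
      (inf_le_right : W₁.1 ⊓ W₂.1 ≤ W₂.1) : delOpen B hB (W₁.1 ⊓ W₂.1) ≤ delOpen B hB W₂.1)).op) e₂
    erw [res_res, res_res] at e₁'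
    erw [res_res, res_res] at e₂'
    exact (aux_map_eq _ _ _).trans (e₁'.trans ((aux_map_eq _ _ _).trans
      (e₂'.trans (aux_map_eq _ _ _))))

end Aux

/-- **Lemma 4.22** (set-theoretic content).  Let `A` be a topological space, `B ⊆ A` closed, and
`F` a sheaf of sets on `A`.  The restriction maps `F(A) → F(B)`, `F(B) → F(Op(B)∖B)`,
`F(A) → F(A∖B)`, `F(A∖B) → F(Op(B)∖B)` form a commutative square, and the induced map
`F(A) → F(A∖B) ×_{F(Op(B)∖B)} F(B)` into the fibered product is a bijection: a global section of
`F` is precisely a section over `A∖B` together with a germ of a section along `B` agreeing on a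
deleted germinal neighborhood of `B`. -/
theorem sections_bijective_fiberedProduct_of_closed
    (B : Set A) (hB : IsClosed B) (F : (Opens A)ᵒᵖ ⥤ Type v)
    (hsheaf : ∀ {ι : Type u} (W : ι → Opens A) (sec : ∀ i, F.obj (op (W i))),
      (∀ i j, F.map (homOfLE (inf_le_left : W i ⊓ W j ≤ W i)).op (sec i)
            = F.map (homOfLE (inf_le_right : W i ⊓ W j ≤ W j)).op (sec j)) →
      ∃! t : F.obj (op (iSup W)), ∀ i, F.map (homOfLE (le_iSup W i)).op t = sec i) :
    (∀ s : F.obj (op (⊤ : Opens A)),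
        sectionToDelGerms F B hB (restrictAwayFrom F B hB s)
          = germsToDelGerms F B hB (germAlong F B s)) ∧
    Function.Injective
      (fun s : F.obj (op (⊤ : Opens A)) =>
        (restrictAwayFrom F B hB s, germAlong F B s)) ∧
    (∀ (u : F.obj (op (⟨Bᶜ, hB.isOpen_compl⟩ : Opens A))) (v : Germs F B),
        sectionToDelGerms F B hB u = germsToDelGerms F B hB v →
        ∃ s : F.obj (op (⊤ : Opens A)),
          restrictAwayFrom F B hB s = u ∧ germAlong F B s = v) := by
  refine ⟨?_, ?_, ?_⟩
  · -- commutativity of the square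
    intro s
    apply Quot.sound
    refine ⟨⟨⊤, by simp⟩, le_top, le_top, ?_⟩
    dsimp only [restrictAwayFrom]
    simp only [res_res]
    all_goals exact aux_map_eq _ _ s
  · -- injectivity
    intro s t h
    simp only [Prod.mk.injEq] at h
    obtain ⟨h1, h2⟩ := h
    obtain ⟨W, hW1, hW2, e⟩ := ((germRel_equiv F B).eqvGen_iff).mp (Quot.eq.mp h2)
    set Bc : Opens A := ⟨Bᶜ, hB.isOpen_compl⟩ with hBc
    let W' : ULift.{u} Bool → Opens A := fun i => match i with
      | ⟨true⟩ => W.1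
      | ⟨false⟩ => Bc
    have hge : (⊤ : Opens A) ≤ iSup W' := by
      intro x _
      by_cases hx : x ∈ B
      · exact Opens.mem_iSup.mpr ⟨⟨true⟩, W.2 hx⟩
      · exact Opens.mem_iSup.mpr ⟨⟨false⟩, hx⟩
    have compat : ∀ i j, F.map (homOfLE (inf_le_left : W' i ⊓ W' j ≤ W' i)).op
        (F.map (homOfLE (le_top : W' i ≤ ⊤)).op s)
        = F.map (homOfLE (inf_le_right : W' i ⊓ W' j ≤ W' j)).op
        (F.map (homOfLE (le_top : W' j ≤ ⊤)).op s) := by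
      intro i j
      simp only [res_res]
      all_goals exact aux_map_eq _ _ s
    obtain ⟨g, hg, huniq⟩ :=
      hsheaf W' (fun i => F.map (homOfLE (le_top : W' i ≤ ⊤)).op s) compat
    have hs' : ∀ i, F.map (homOfLE (le_iSup W' i)).op
        (F.map (homOfLE (le_top : iSup W' ≤ ⊤)).op s)
        = F.map (homOfLE (le_top : W' i ≤ ⊤)).op s := by
      intro i
      simp only [res_res]
      all_goals exact aux_map_eq _ _ s
    have ht' : ∀ i, F.map (homOfLE (le_iSup W' i)).op
        (F.map (homOfLE (le_top : iSup W' ≤ ⊤)).op t)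
        = F.map (homOfLE (le_top : W' i ≤ ⊤)).op s := by
      rintro ⟨_ | _⟩
      · -- the open set `Bᶜ`
        rw [res_res]
        calc F.map (homOfLE ((le_iSup W' ⟨false⟩).trans le_top)).op t
            = F.map (homOfLE (le_top : Bc ≤ ⊤)).op t := aux_map_eq _ _ t
          _ = F.map (homOfLE (le_top : Bc ≤ ⊤)).op s := h1.symm
          _ = F.map (homOfLE (le_top : W' ⟨false⟩ ≤ ⊤)).op s := aux_map_eq _ _ s
      · -- the open set `W`
        rw [res_res]
        calc F.map (homOfLE ((le_iSup W' ⟨true⟩).trans le_top)).op t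
            = F.map (homOfLE hW2).op t := aux_map_eq _ _ t
          _ = F.map (homOfLE hW1).op s := e.symm
          _ = F.map (homOfLE (le_top : W' ⟨true⟩ ≤ ⊤)).op s := aux_map_eq _ _ s
    have key := (huniq _ hs').trans (huniq _ ht').symm
    have hs := congrArg (F.map (homOfLE hge).op) key
    rw [res_res, res_res, res_self, res_self] at hs
    exact hs
  · -- surjectivity onto the fibered product
    intro u v hcomm
    obtain ⟨⟨U, t⟩, rfl⟩ := Quot.exists_rep v
    obtain ⟨W, h₁, h₂, e⟩ :=
      ((delGermRel_equiv F B hB).eqvGen_iff).mp (Quot.eq.mp hcomm)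
    dsimp only at h₁ h₂ e
    rw [res_res, res_res] at e
    let Bc : Opens A := ⟨Bᶜ, hB.isOpen_compl⟩
    let W' : ULift.{u} Bool → Opens A := fun i => match i with
      | ⟨true⟩ => W.1
      | ⟨false⟩ => Bc
    have hge : (⊤ : Opens A) ≤ iSup W' := by
      intro x _
      by_cases hx : x ∈ B
      · exact Opens.mem_iSup.mpr ⟨⟨true⟩, W.2 hx⟩
      · exact Opens.mem_iSup.mpr ⟨⟨false⟩, hx⟩
    let sec : ∀ i, F.obj (op (W' i)) := fun i => match i with
      | ⟨true⟩ => F.map (homOfLE h₂).op t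
      | ⟨false⟩ => u
    have e' := congrArg (F.map (homOfLE
      (le_inf inf_le_right inf_le_left : Bc ⊓ W.1 ≤ delOpen B hB W.1)).op) e
    rw [res_res, res_res] at e'
    have compat : ∀ i j, F.map (homOfLE (inf_le_left : W' i ⊓ W' j ≤ W' i)).op (sec i)
        = F.map (homOfLE (inf_le_right : W' i ⊓ W' j ≤ W' j)).op (sec j) := by
      rintro ⟨_ | _⟩ ⟨_ | _⟩
      · exact aux_map_eq _ _ u
      · -- i = false (Bᶜ), j = true (W)
        show F.map (homOfLE (inf_le_left : Bc ⊓ W.1 ≤ Bc)).op u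
          = F.map (homOfLE (inf_le_right : Bc ⊓ W.1 ≤ W.1)).op (F.map (homOfLE h₂).op t)
        rw [res_res]
        calc F.map (homOfLE (inf_le_left : Bc ⊓ W.1 ≤ Bc)).op u
            = F.map (homOfLE ((le_inf inf_le_right inf_le_left :
                Bc ⊓ W.1 ≤ delOpen B hB W.1).trans
                ((inf_le_inf_right _ h₁).trans
                  (inf_le_right : delOpen B hB ⊤ ≤ Bc)))).op u := aux_map_eq _ _ u
          _ = F.map (homOfLE ((le_inf inf_le_right inf_le_left :
                Bc ⊓ W.1 ≤ delOpen B hB W.1).trans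
                ((inf_le_inf_right _ h₂).trans
                  (inf_le_left : delOpen B hB U.1 ≤ U.1)))).op t := e'
          _ = F.map (homOfLE ((inf_le_right : Bc ⊓ W.1 ≤ W.1).trans h₂)).op t :=
              aux_map_eq _ _ t
      · -- i = true (W), j = false (Bᶜ)
        show F.map (homOfLE (inf_le_left : W.1 ⊓ Bc ≤ W.1)).op (F.map (homOfLE h₂).op t)
          = F.map (homOfLE (inf_le_right : W.1 ⊓ Bc ≤ Bc)).op u
        rw [res_res]
        calc F.map (homOfLE ((inf_le_left : W.1 ⊓ Bc ≤ W.1).trans h₂)).op t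
            = F.map (homOfLE ((inf_le_inf_right _ h₂).trans
                (inf_le_left : delOpen B hB U.1 ≤ U.1))).op t := aux_map_eq _ _ t
          _ = F.map (homOfLE ((inf_le_inf_right _ h₁).trans
                (inf_le_right : delOpen B hB ⊤ ≤ Bc))).op u := e.symm
          _ = F.map (homOfLE (inf_le_right : W.1 ⊓ Bc ≤ Bc)).op u := aux_map_eq _ _ u
      · -- i = j = true
        simp only [res_res]
        all_goals exact aux_map_eq _ _ t
    obtain ⟨g, hg, -⟩ := hsheaf W' sec compat
    refine ⟨F.map (homOfLE hge).op g, ?_, ?_⟩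
    · show F.map (homOfLE le_top).op (F.map (homOfLE hge).op g) = u
      rw [res_res]
      calc F.map (homOfLE ((le_top : Bc ≤ ⊤).trans hge)).op g
          = F.map (homOfLE (le_iSup W' ⟨false⟩)).op g := aux_map_eq _ _ g
        _ = u := hg ⟨false⟩
    · apply Quot.sound
      refine ⟨W, le_top, h₂, ?_⟩
      show F.map (homOfLE (le_top : W.1 ≤ ⊤)).op (F.map (homOfLE hge).op g)
        = F.map (homOfLE h₂).op t
      rw [res_res]
      calc F.map (homOfLE ((le_top : W.1 ≤ ⊤).trans hge)).op g
          = F.map (homOfLE (le_iSup W' ⟨true⟩)).op g := aux_map_eq _ _ g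
        _ = F.map (homOfLE h₂).op t := hg ⟨true⟩
end
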